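/- Let ℂ be a category with a terminal object T and 𝔻 a category with an initial object I. If (X, I) →^{(m₁, m₂)} (C, D) →^{(e₁, e₂)} (T, Y) is a short exact sequence in ℂ×𝔻 relative to the ideal of morphisms factoring through objects whose first component is terminal in ℂ and whose second component is initial in 𝔻, then m₁ is a split epimorphism (hence, being also a monomorphism, an isomorphism) and e₂ is a split monomorphism (hence, being also an epimorphism, an isomorphism). -/

import Mathlib

open CategoryTheory CategoryTheory.Limits

universe w v v₁ v₂ u u₁ u₂

/-- A morphism is *null* relative to a class of objects `Z` if it factors
through some object of `Z`. -/
def IsNull {C : Type u} [Category.{v} C] (Z : Set C) {X Y : C} (f : X ⟶ Y) : Prop :=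
  ∃ (W : C) (_ : W ∈ Z) (g : X ⟶ W) (h : W ⟶ Y), g ≫ h = f

/-- `m : T ⟶ X` is a kernel of `e : X ⟶ F` relative to the ideal of morphisms
factoring through objects of `Z`. -/
def IsRelKernel {C : Type u} [Category.{v} C] (Z : Set C) {T X F : C}
    (m : T ⟶ X) (e : X ⟶ F) : Prop :=
  IsNull Z (m ≫ e) ∧ ∀ ⦃U : C⦄ (u : U ⟶ X), IsNull Z (u ≫ e) → ∃! u' : U ⟶ T, u' ≫ m = u

/-- `e : X ⟶ F` is a cokernel of `m : T ⟶ X` relative to the ideal of morphisms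
factoring through objects of `Z`. -/
def IsRelCokernel {C : Type u} [Category.{v} C] (Z : Set C) {T X F : C}
    (m : T ⟶ X) (e : X ⟶ F) : Prop :=
  IsNull Z (m ≫ e) ∧ ∀ ⦃V : C⦄ (v : X ⟶ V), IsNull Z (m ≫ v) → ∃! v' : F ⟶ V, e ≫ v' = v

/-- `T ⟶ X ⟶ F` is a short exact sequence relative to the null ideal determined by `Z`. -/
def IsShortExact {C : Type u} [Category.{v} C] (Z : Set C) {T X F : C}
    (m : T ⟶ X) (e : X ⟶ F) : Prop :=
  IsRelKernel Z m e ∧ IsRelCokernel Z m e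

/-- `(T, F)` is a pretorsion theory: (T1) every morphism from a torsion object to a
torsion-free object is null, and (T2) every object is the middle term of a short
exact sequence with torsion left part and torsion-free right part. -/
def IsPretorsionTheory {C : Type u} [Category.{v} C] (T F : Set C) : Prop :=
  (∀ ⦃A B : C⦄, A ∈ T → B ∈ F → ∀ f : A ⟶ B, IsNull (T ∩ F) f) ∧
  (∀ X : C, ∃ (A B : C) (_ : A ∈ T) (_ : B ∈ F) (m : A ⟶ X) (e : X ⟶ B),
    IsShortExact (T ∩ F) m e)


lemma IsNull.comp_left {C : Type u} [Category.{v} C] {Z : Set C} {A X Y : C}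
    (w : A ⟶ X) {f : X ⟶ Y} (hf : IsNull Z f) : IsNull Z (w ≫ f) := by
  obtain ⟨W, hW, g, h, rfl⟩ := hf
  exact ⟨W, hW, w ≫ g, h, by simp⟩

lemma IsNull.comp_right {C : Type u} [Category.{v} C] {Z : Set C} {X Y B : C}
    {f : X ⟶ Y} (hf : IsNull Z f) (w : Y ⟶ B) : IsNull Z (f ≫ w) := by
  obtain ⟨W, hW, g, h, rfl⟩ := hf
  exact ⟨W, hW, g, h ≫ w, by simp⟩

/-- in a short exact sequence `(X,I) ⟶ (C,D) ⟶ (T,Y)` in `ℂ × 𝔻`, with `I`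
initial and `T` terminal, relative to the ideal of morphisms factoring through objects of
`𝟏 × 𝟎`, the morphism `m₁` is a split epimorphism (hence an isomorphism) and `e₂` is a
split monomorphism (hence an isomorphism). -/
theorem stmt14 {𝕮 : Type u₁} {𝕯 : Type u₂} [Category.{v₁} 𝕮] [Category.{v₂} 𝕯]
    {I : 𝕯} (hI : IsInitial I) {T : 𝕮} (hT : IsTerminal T)
    {X C : 𝕮} {D Y : 𝕯}
    (m₁ : X ⟶ C) (m₂ : I ⟶ D) (e₁ : C ⟶ T) (e₂ : D ⟶ Y)
    (hse : IsShortExact {P : 𝕮 × 𝕯 | Nonempty (IsTerminal P.1) ∧ Nonempty (IsInitial P.2)}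
      ((m₁, m₂) : ((X, I) : 𝕮 × 𝕯) ⟶ (C, D))
      ((e₁, e₂) : ((C, D) : 𝕮 × 𝕯) ⟶ (T, Y))) :
    IsSplitEpi m₁ ∧ IsIso m₁ ∧ IsSplitMono e₂ ∧ IsIso e₂ := by
  obtain ⟨⟨hknull, hker⟩, ⟨hcnull, hcoker⟩⟩ := hse
  set Z : Set (𝕮 × 𝕯) := {P : 𝕮 × 𝕯 | Nonempty (IsTerminal P.1) ∧ Nonempty (IsInitial P.2)}
  have hTI : ((T, I) : 𝕮 × 𝕯) ∈ Z := ⟨⟨hT⟩, ⟨hI⟩⟩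
  -- split epi for m₁
  have hnull1 : IsNull Z (((𝟙 C, hI.to D) : ((C, I) : 𝕮 × 𝕯) ⟶ (C, D)) ≫ ((e₁, e₂) : ((C, D) : 𝕮 × 𝕯) ⟶ (T, Y))) := by
    refine ⟨(T, I), hTI, (hT.from C, 𝟙 I), (𝟙 T, hI.to Y), ?_⟩
    exact Prod.ext (hT.hom_ext _ _) (hI.hom_ext _ _)
  obtain ⟨s, hs, _⟩ := hker ((𝟙 C, hI.to D) : ((C, I) : 𝕮 × 𝕯) ⟶ (C, D)) hnull1
  have hs1 : s.1 ≫ m₁ = 𝟙 C := congrArg Prod.fst hs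
  have hsplitepi : IsSplitEpi m₁ := ⟨⟨s.1, hs1⟩⟩
  -- mono for m₁
  have hmono : Mono m₁ := by
    constructor
    intro W f g h
    have hnull : IsNull Z ((((f, 𝟙 I) : ((W, I) : 𝕮 × 𝕯) ⟶ (X, I)) ≫ (m₁, m₂)) ≫ ((e₁, e₂) : ((C, D) : 𝕮 × 𝕯) ⟶ (T, Y))) := by
      rw [Category.assoc]
      exact IsNull.comp_left _ hknull
    obtain ⟨u', -, huniq⟩ := hker (((f, 𝟙 I) : ((W, I) : 𝕮 × 𝕯) ⟶ (X, I)) ≫ ((m₁, m₂) : ((X, I) : 𝕮 × 𝕯) ⟶ (C, D))) hnull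
    have h1 : ((f, 𝟙 I) : ((W, I) : 𝕮 × 𝕯) ⟶ (X, I)) = u' := huniq _ rfl
    have h2 : ((g, 𝟙 I) : ((W, I) : 𝕮 × 𝕯) ⟶ (X, I)) = u' := by
      apply huniq
      exact Prod.ext (by simpa using h.symm) rfl
    have := h1.trans h2.symm
    exact congrArg Prod.fst this
  have hiso1 : IsIso m₁ := @isIso_of_mono_of_isSplitEpi _ _ _ _ _ hmono hsplitepi
  -- split mono for e₂
  have hnull2 : IsNull Z (((m₁, m₂) : ((X, I) : 𝕮 × 𝕯) ⟶ (C, D)) ≫ ((hT.from C, 𝟙 D) : ((C, D) : 𝕮 × 𝕯) ⟶ (T, D))) := by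
    refine ⟨(T, I), hTI, (hT.from X, 𝟙 I), (𝟙 T, m₂), ?_⟩
    exact Prod.ext (hT.hom_ext _ _) (hI.hom_ext _ _)
  obtain ⟨r, hr, _⟩ := hcoker ((hT.from C, 𝟙 D) : ((C, D) : 𝕮 × 𝕯) ⟶ (T, D)) hnull2
  have hr2 : e₂ ≫ r.2 = 𝟙 D := congrArg Prod.snd hr
  have hsplitmono : IsSplitMono e₂ := ⟨⟨r.2, hr2⟩⟩
  -- epi for e₂
  have hepi : Epi e₂ := by
    constructor
    intro V f g h
    have hnull : IsNull Z (((m₁, m₂) : ((X, I) : 𝕮 × 𝕯) ⟶ (C, D)) ≫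
        ((e₁, e₂) ≫ ((𝟙 T, f) : ((T, Y) : 𝕮 × 𝕯) ⟶ (T, V)))) := by
      rw [← Category.assoc]
      exact IsNull.comp_right hcnull _
    obtain ⟨v', -, hvuniq⟩ := hcoker (((e₁, e₂) : ((C, D) : 𝕮 × 𝕯) ⟶ (T, Y)) ≫ ((𝟙 T, f) : ((T, Y) : 𝕮 × 𝕯) ⟶ (T, V))) hnull
    have h1 : ((𝟙 T, f) : ((T, Y) : 𝕮 × 𝕯) ⟶ (T, V)) = v' := hvuniq _ rfl
    have h2 : ((𝟙 T, g) : ((T, Y) : 𝕮 × 𝕯) ⟶ (T, V)) = v' := by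
      apply hvuniq
      exact Prod.ext rfl (by simpa using h.symm)
    exact congrArg Prod.snd (h1.trans h2.symm)
  have hiso2 : IsIso e₂ := @isIso_of_epi_of_isSplitMono _ _ _ _ _ hepi hsplitmono
  exact ⟨hsplitepi, hiso1, hsplitmono, hiso2⟩
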